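/- arXiv:2409.05568 — 2 statements merged into one kernel-verified Lean document; each statement's English description precedes it below -/
import Mathlib

section
/- Every functor from a category M to the arrow category [1] = {0 < 1} is an exponentiable functor; consequently the slice category Cat/[1] is cartesian closed. -/
/-!
STATEMENT 4: Every functor from a (small) category `M` to the walking arrow
`[1] = {0 < 1}` is exponentiable; consequently the slice category `Cat/[1]`
is cartesian closed.
-/

open CategoryTheory Limits

universe u

/-- A functor `φ : D ⥤ C` (a morphism of `Cat`) is exponentiable (an
exponential fibration) if the pullback functor
`D ×_C (−) : Cat/C ⥤ Cat/C` admits a right adjoint. -/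
def CatExponentiable {D C : Cat.{u, u}} (φ : D ⟶ C) : Prop :=
  (Over.pullback φ ⋙ Over.map φ).IsLeftAdjoint

/-- The walking arrow `[1]`, as an object of `Cat`. -/
def walkingArrowCat : Cat.{u, u} := Cat.of (ULift.{u} (Fin 2))

noncomputable instance : CartesianMonoidalCategory (Over walkingArrowCat.{u}) :=
  CartesianMonoidalCategory.ofHasFiniteProducts

abbrev CategoryTheory.Cat.Hom.obj {C D : Cat} (F : C ⟶ D) (x : C) : D := F.toFunctor.obj x

abbrev CategoryTheory.Cat.Hom.map {C D : Cat} (F : C ⟶ D) {x y : C} (f : x ⟶ y) :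
    F.obj x ⟶ F.obj y := F.toFunctor.map f

lemma CategoryTheory.Cat.Hom.map_id {C D : Cat} (F : C ⟶ D) (x : C) :
    F.map (𝟙 x) = 𝟙 (F.obj x) := F.toFunctor.map_id x

lemma CategoryTheory.Cat.Hom.map_comp {C D : Cat} (F : C ⟶ D) {x y z : C} (f : x ⟶ y)
    (g : y ⟶ z) : F.map (f ≫ g) = F.map f ≫ F.map g := F.toFunctor.map_comp f g

namespace St4

structure FSub {C : Type*} [Category C] (P : C → Prop) where
  obj : C
  property : P obj

instance {C : Type*} [Category C] (P : C → Prop) : Category (FSub P) where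
  Hom a b := a.obj ⟶ b.obj
  id a := 𝟙 a.obj
  comp f g := f ≫ g
  id_comp f := Category.id_comp f
  comp_id f := Category.comp_id f
  assoc f g h := Category.assoc f g h

def fsubIncl {C : Type*} [Category C] (P : C → Prop) : FSub P ⥤ C where
  obj a := a.obj
  map f := f

lemma FSub.ext {C : Type*} [Category C] {P : C → Prop} {a b : FSub P} (h : a.obj = b.obj) :
    a = b := by
  cases a; cases b; cases h; rfl

instance (i j : walkingArrowCat.{u}) : Subsingleton (i ⟶ j) :=
  ⟨fun a b => by rcases a with ⟨⟨a⟩⟩; rcases b with ⟨⟨b⟩⟩; rfl⟩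

lemma cobj {C D : Cat.{u,u}} {F G : C ⟶ D} (h : F = G) (x : C) : F.obj x = G.obj x := by
  subst h; rfl

lemma chom {C D : Cat.{u,u}} {F G : C ⟶ D} (h : F = G) {x y : C} (f : x ⟶ y) :
    F.map f = eqToHom (cobj h x) ≫ G.map f ≫ eqToHom (cobj h y).symm := by
  subst h; simp

lemma wfunext {A : Cat.{u,u}} {F G : A ⟶ walkingArrowCat.{u}}
    (h : ∀ x, F.obj x = G.obj x) : F = G :=
  Cat.ext (CategoryTheory.Functor.ext h (fun _ _ _ => Subsingleton.elim _ _))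

lemma wa_step {i j k : walkingArrowCat.{u}} (u : i ⟶ j) (v : j ⟶ k) (h : ¬ i = j) : j = k := by
  obtain ⟨⟨u⟩⟩ := u; obtain ⟨⟨v⟩⟩ := v
  rcases i with ⟨i⟩; rcases j with ⟨j⟩; rcases k with ⟨k⟩
  refine congrArg ULift.up ?_
  have h' : i ≠ j := fun e => h (congrArg ULift.up e)
  have hu : i ≤ j := u
  have hv : j ≤ k := v
  omega

section Pb

variable {M X : Cat.{u,u}} (χ : X ⟶ walkingArrowCat.{u}) (φ : M ⟶ walkingArrowCat.{u})

abbrev Pb : Type u := FSub (fun p : ↥X × ↥M => χ.obj p.1 = φ.obj p.2)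

def pbCat : Cat.{u,u} := Cat.of (Pb χ φ)

def pbFst : pbCat χ φ ⟶ X := Cat.Hom.ofFunctor (fsubIncl _ ⋙ CategoryTheory.Prod.fst _ _)

def pbSnd : pbCat χ φ ⟶ M := Cat.Hom.ofFunctor (fsubIncl _ ⋙ CategoryTheory.Prod.snd _ _)

lemma pb_w : pbFst χ φ ≫ χ = pbSnd χ φ ≫ φ := wfunext (fun p => p.2)

@[simp] lemma eqToHom_pb_fst {a b : ↥(pbCat χ φ)} (h : a = b) :
    (eqToHom h).1 = eqToHom (congrArg (fun z : ↥(pbCat χ φ) => z.obj.1) h) := by subst h; rfl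

@[simp] lemma eqToHom_pb_snd {a b : ↥(pbCat χ φ)} (h : a = b) :
    (eqToHom h).2 = eqToHom (congrArg (fun z : ↥(pbCat χ φ) => z.obj.2) h) := by subst h; rfl

@[simp] lemma pb_comp_fst {a b c : ↥(pbCat χ φ)} (f : a ⟶ b) (g : b ⟶ c) : (f ≫ g).1 = f.1 ≫ g.1 := rfl
@[simp] lemma pb_comp_snd {a b c : ↥(pbCat χ φ)} (f : a ⟶ b) (g : b ⟶ c) : (f ≫ g).2 = f.2 ≫ g.2 := rfl

def pbCone : PullbackCone χ φ := PullbackCone.mk (pbFst χ φ) (pbSnd χ φ) (pb_w χ φ)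

def pbLiftF (s : PullbackCone χ φ) : ↥s.pt ⥤ ↥(pbCat χ φ) where
  obj t := ⟨(s.fst.obj t, s.snd.obj t), cobj s.condition t⟩
  map f := (s.fst.map f, s.snd.map f)
  map_id t := Prod.ext (s.fst.map_id t) (s.snd.map_id t)
  map_comp f g := Prod.ext (s.fst.map_comp f g) (s.snd.map_comp f g)

def pbLift (s : PullbackCone χ φ) : s.pt ⟶ pbCat χ φ := Cat.Hom.ofFunctor (pbLiftF χ φ s)

def pbIsLimit : IsLimit (pbCone χ φ) := by
  refine PullbackCone.IsLimit.mk _ (pbLift χ φ) (fun s => rfl) (fun s => rfl) ?_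
  intro s m h₁ h₂
  refine Cat.ext <| CategoryTheory.Functor.ext (fun t => FSub.ext
    (Prod.ext (cobj h₁ t) (cobj h₂ t))) ?_
  intro a b f
  refine Prod.ext ?_ ?_
  · have := chom h₁ f
    simp only [pb_comp_fst, eqToHom_pb_fst]
    erw [eqToHom_pb_fst]
    exact this
  · have := chom h₂ f
    simp only [pb_comp_snd, eqToHom_pb_snd]
    erw [eqToHom_pb_snd]
    exact this

end Pb
section Fp

variable {M : Cat.{u,u}} (φ : M ⟶ walkingArrowCat.{u})

/-- The concrete "product with `φ`" endofunctor on `Over [1]`. -/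
def Fp : Over walkingArrowCat.{u} ⥤ Over walkingArrowCat.{u} where
  obj X := Over.mk (pbSnd X.hom φ ≫ φ)
  map {X Y} f := Over.homMk (Cat.Hom.ofFunctor
    { obj := fun p => ⟨(f.left.obj p.1.1, p.1.2),
        (cobj (Over.w f) p.1.1).trans p.2⟩
      map := fun g => (f.left.map g.1, g.2)
      map_id := fun p => Prod.ext (f.left.map_id p.obj.1) rfl
      map_comp := fun g h => Prod.ext (f.left.map_comp g.1 h.1) rfl })
    (wfunext (fun p => rfl))
  map_id X := by
    apply Over.OverMorphism.ext
    apply Cat.ext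
    apply CategoryTheory.Functor.ext (fun p => rfl)
  map_comp {X Y Z} f g := by
    apply Over.OverMorphism.ext
    apply Cat.ext
    apply CategoryTheory.Functor.ext (fun p => rfl)

variable (Z : Over walkingArrowCat.{u})

/-- Projection to `Z` (for `φ = Z.hom`). -/
def fpP (X : Over walkingArrowCat.{u}) : (Fp Z.hom).obj X ⟶ Z :=
  Over.homMk (pbSnd X.hom Z.hom) rfl

/-- Projection to `X`. -/
def fpQ (X : Over walkingArrowCat.{u}) : (Fp Z.hom).obj X ⟶ X :=
  Over.homMk (pbFst X.hom Z.hom) (pb_w X.hom Z.hom)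

lemma fpP_nat {X Y : Over walkingArrowCat.{u}} (f : X ⟶ Y) :
    (Fp Z.hom).map f ≫ fpP Z Y = fpP Z X := by
  apply Over.OverMorphism.ext; rfl

lemma fpQ_nat {X Y : Over walkingArrowCat.{u}} (f : X ⟶ Y) :
    (Fp Z.hom).map f ≫ fpQ Z Y = fpQ Z X ≫ f := by
  apply Over.OverMorphism.ext; rfl

def fpFanIsLimit (X : Over walkingArrowCat.{u}) :
    IsLimit (BinaryFan.mk (fpP Z X) (fpQ Z X)) := by
  refine BinaryFan.isLimitMk (fun s => ?_) (fun s => ?_) (fun s => ?_) (fun s m h₁ h₂ => ?_)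
  · refine Over.homMk (pbLift X.hom Z.hom
      (PullbackCone.mk (BinaryFan.snd s).left (BinaryFan.fst s).left
        (wfunext (fun x => (cobj (Over.w (BinaryFan.snd s)) x).trans
          (cobj (Over.w (BinaryFan.fst s)) x).symm)))) ?_
    exact wfunext (fun x => cobj (Over.w (BinaryFan.fst s)) x)
  · apply Over.OverMorphism.ext; rfl
  · apply Over.OverMorphism.ext; rfl
  · apply Over.OverMorphism.ext
    refine PullbackCone.IsLimit.hom_ext (pbIsLimit X.hom Z.hom) ?_ ?_
    · have := congrArg CommaMorphism.left h₂
      exact this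
    · have := congrArg CommaMorphism.left h₁
      exact this

end Fp

section TensorIso

variable {D : Type*} [Category D] [CartesianMonoidalCategory D]

open MonoidalCategory

/-- A functor with natural limit binary fans over `Z` and the identity is
isomorphic to `tensorLeft Z`. -/
noncomputable def tensorLeftIso (Z : D) (H : D ⥤ D)
    (p : ∀ X, H.obj X ⟶ Z) (q : ∀ X, H.obj X ⟶ X)
    (hp : ∀ {X Y : D} (f : X ⟶ Y), H.map f ≫ p Y = p X)
    (hq : ∀ {X Y : D} (f : X ⟶ Y), H.map f ≫ q Y = q X ≫ f)
    (L : ∀ X, IsLimit (BinaryFan.mk (p X) (q X))) :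
    H ≅ MonoidalCategory.tensorLeft Z := by
  refine NatIso.ofComponents (fun X => ?_) (fun {X Y} f => ?_)
  · refine ⟨CartesianMonoidalCategory.lift (p X) (q X),
      (L X).lift (BinaryFan.mk (CartesianMonoidalCategory.fst Z X) (CartesianMonoidalCategory.snd Z X)),
      ?_, ?_⟩
    · refine BinaryFan.IsLimit.hom_ext (L X) ?_ ?_
      · have h1 : (L X).lift (BinaryFan.mk (CartesianMonoidalCategory.fst Z X)
            (CartesianMonoidalCategory.snd Z X)) ≫ p X = CartesianMonoidalCategory.fst Z X :=
          (L X).fac _ ⟨WalkingPair.left⟩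
        simp [h1]
      · have h2 : (L X).lift (BinaryFan.mk (CartesianMonoidalCategory.fst Z X)
            (CartesianMonoidalCategory.snd Z X)) ≫ q X = CartesianMonoidalCategory.snd Z X :=
          (L X).fac _ ⟨WalkingPair.right⟩
        simp [h2]
    · refine CartesianMonoidalCategory.hom_ext _ _ ?_ ?_
      · have h1 : (L X).lift (BinaryFan.mk (CartesianMonoidalCategory.fst Z X)
            (CartesianMonoidalCategory.snd Z X)) ≫ p X = CartesianMonoidalCategory.fst Z X :=
          (L X).fac _ ⟨WalkingPair.left⟩
        simp [h1]
      · have h2 : (L X).lift (BinaryFan.mk (CartesianMonoidalCategory.fst Z X)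
            (CartesianMonoidalCategory.snd Z X)) ≫ q X = CartesianMonoidalCategory.snd Z X :=
          (L X).fac _ ⟨WalkingPair.right⟩
        simp [h2]
  · refine CartesianMonoidalCategory.hom_ext _ _ ?_ ?_
    · simp [hp]
    · simp [hq]

end TensorIso

noncomputable section Abstract

variable {M : Cat.{u,u}} (φ : M ⟶ walkingArrowCat.{u})

def faP (X : Over walkingArrowCat.{u}) :
    (Over.pullback φ ⋙ Over.map φ).obj X ⟶ Over.mk φ :=
  Over.homMk (pullback.snd X.hom φ) rfl

def faQ (X : Over walkingArrowCat.{u}) :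
    (Over.pullback φ ⋙ Over.map φ).obj X ⟶ X :=
  Over.homMk (pullback.fst X.hom φ) pullback.condition

lemma faP_nat {X Y : Over walkingArrowCat.{u}} (f : X ⟶ Y) :
    (Over.pullback φ ⋙ Over.map φ).map f ≫ faP φ Y = faP φ X := by
  apply Over.OverMorphism.ext
  simp [faP]
  exact pullback.lift_snd _ _ _

lemma faQ_nat {X Y : Over walkingArrowCat.{u}} (f : X ⟶ Y) :
    (Over.pullback φ ⋙ Over.map φ).map f ≫ faQ φ Y = faQ φ X ≫ f := by
  apply Over.OverMorphism.ext
  simp [faQ]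
  exact pullback.lift_fst _ _ _

def faFanIsLimit (X : Over walkingArrowCat.{u}) :
    IsLimit (BinaryFan.mk (faP φ X) (faQ φ X)) := by
  refine BinaryFan.isLimitMk (fun s => ?_) (fun s => ?_) (fun s => ?_) (fun s m h₁ h₂ => ?_)
  · refine Over.homMk (pullback.lift (BinaryFan.snd s).left (BinaryFan.fst s).left
      ((Over.w (BinaryFan.snd s)).trans (Over.w (BinaryFan.fst s)).symm)) ?_
    show pullback.lift _ _ _ ≫ pullback.snd X.hom φ ≫ φ = s.pt.hom
    rw [← Category.assoc]
    erw [pullback.lift_snd]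
    exact Over.w (BinaryFan.fst s)
  · apply Over.OverMorphism.ext
    simp [faP]
    exact pullback.lift_snd _ _ _
  · apply Over.OverMorphism.ext
    simp [faQ]
    exact pullback.lift_fst _ _ _
  · apply Over.OverMorphism.ext
    refine pullback.hom_ext ?_ ?_
    · have := congrArg CommaMorphism.left h₂
      simp [faQ] at this
      rw [this]; exact (pullback.lift_fst _ _ _).symm
    · have := congrArg CommaMorphism.left h₁
      simp [faP] at this
      rw [this]; exact (pullback.lift_snd _ _ _).symm

end Abstract

section Exp

variable {M : Cat.{u,u}} (φ : M ⟶ walkingArrowCat.{u}) (N : Over walkingArrowCat.{u})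

/-- The fiber of `φ` over `i`. -/
abbrev Fib (i : walkingArrowCat.{u}) : Type u :=
  FSub (fun m : ↥M => φ.obj m = i)

/-- Package a morphism of `M` as a morphism of a fiber. -/
def fh {i : walkingArrowCat.{u}} {a b : ↥M} (ha : φ.obj a = i) (hb : φ.obj b = i)
    (f : a ⟶ b) : (⟨a, ha⟩ : Fib φ i) ⟶ ⟨b, hb⟩ := f

instance : DecidableEq (↥(walkingArrowCat.{u})) :=
  show DecidableEq (ULift.{u} (Fin 2)) from inferInstance

/-- Objects of the exponential `(φ ⇒ N)` over the walking arrow. -/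
structure EObj : Type u where
  pt : walkingArrowCat.{u}
  F : Fib φ pt ⥤ ↥(N.left)
  over' : ∀ a : Fib φ pt, N.hom.obj (F.obj a) = pt

/-- Morphisms of the exponential. -/
structure EHom (A B : EObj φ N) : Type u where
  le : A.pt ⟶ B.pt
  t : ∀ (a b : ↥M) (ha : φ.obj a = A.pt) (hb : φ.obj b = B.pt) (m : a ⟶ b),
      A.F.obj ⟨a, ha⟩ ⟶ B.F.obj ⟨b, hb⟩
  natl : ∀ (a a' b : ↥M) (ha : φ.obj a = A.pt) (ha' : φ.obj a' = A.pt)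
      (hb : φ.obj b = B.pt) (f : a ⟶ a') (m : a' ⟶ b),
      t a b ha hb (f ≫ m) = A.F.map (fh φ ha ha' f) ≫ t a' b ha' hb m
  natr : ∀ (a b b' : ↥M) (ha : φ.obj a = A.pt) (hb : φ.obj b = B.pt)
      (hb' : φ.obj b' = B.pt) (m : a ⟶ b) (g : b ⟶ b'),
      t a b' ha hb' (m ≫ g) = t a b ha hb m ≫ B.F.map (fh φ hb hb' g)

variable {φ N}

lemma EHom.ext' {A B : EObj φ N} {u v : EHom φ N A B}
    (h : ∀ (a b : ↥M) (ha : φ.obj a = A.pt) (hb : φ.obj b = B.pt) (m : a ⟶ b),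
      u.t a b ha hb m = v.t a b ha hb m) : u = v := by
  obtain ⟨ul, ut, unl, unr⟩ := u; obtain ⟨vl, vt, vnl, vnr⟩ := v
  obtain rfl : ul = vl := Subsingleton.elim _ _
  have : ut = vt := by
    funext a b ha hb m; exact h a b ha hb m
  cases this
  rfl

/-- Shift a `t`-component leftwards when the source lies in both fibers. -/
lemma EHom.t_shift_l {A B : EObj φ N} (u : EHom φ N A B) {a b : ↥M}
    (ha : φ.obj a = A.pt) (ha2 : φ.obj a = B.pt) (hb : φ.obj b = B.pt) (m : a ⟶ b) :
    u.t a b ha hb m = u.t a a ha ha2 (𝟙 a) ≫ B.F.map (fh φ ha2 hb m) := by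
  have := u.natr a a b ha ha2 hb (𝟙 a) m
  rwa [Category.id_comp] at this

/-- Shift a `t`-component rightwards when the target lies in both fibers. -/
lemma EHom.t_shift_r {A B : EObj φ N} (u : EHom φ N A B) {a b : ↥M}
    (ha : φ.obj a = A.pt) (hb1 : φ.obj b = A.pt) (hb : φ.obj b = B.pt) (m : a ⟶ b) :
    u.t a b ha hb m = A.F.map (fh φ ha hb1 m) ≫ u.t b b hb1 hb (𝟙 b) := by
  have := u.natl a b b ha hb1 hb m (𝟙 b)
  rwa [Category.comp_id] at this

def Eid (A : EObj φ N) : EHom φ N A A where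
  le := 𝟙 _
  t a b ha hb m := A.F.map (fh φ ha hb m)
  natl a a' b ha ha' hb f m := A.F.map_comp (fh φ ha ha' f) (fh φ ha' hb m)
  natr a b b' ha hb hb' m g := A.F.map_comp (fh φ ha hb m) (fh φ hb hb' g)

def Ecomp {A B C : EObj φ N} (u : EHom φ N A B) (v : EHom φ N B C) : EHom φ N A C where
  le := u.le ≫ v.le
  t a b ha hc m :=
    if h : A.pt = B.pt then
      u.t a a ha (ha.trans h) (𝟙 a) ≫ v.t a b (ha.trans h) hc m
    else
      u.t a b ha (hc.trans (wa_step u.le v.le h).symm) m ≫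
        v.t b b (hc.trans (wa_step u.le v.le h).symm) hc (𝟙 b)
  natl a a' b ha ha' hc f m := by
    by_cases h : A.pt = B.pt
    · rw [dif_pos h, dif_pos h]
      have e1 : v.t a b (ha.trans h) hc (f ≫ m)
          = B.F.map (fh φ (ha.trans h) (ha'.trans h) f) ≫ v.t a' b (ha'.trans h) hc m :=
        v.natl a a' b _ _ _ f m
      have e2 : u.t a a' ha (ha'.trans h) f
          = u.t a a ha (ha.trans h) (𝟙 a) ≫ B.F.map (fh φ (ha.trans h) (ha'.trans h) f) :=
        u.t_shift_l _ _ _ f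
      have e3 : u.t a a' ha (ha'.trans h) f
          = A.F.map (fh φ ha ha' f) ≫ u.t a' a' ha' (ha'.trans h) (𝟙 a') :=
        u.t_shift_r _ _ _ f
      rw [e1, ← Category.assoc, ← e2, e3, Category.assoc]
    · rw [dif_neg h, dif_neg h]
      have e1 : u.t a b ha (hc.trans (wa_step u.le v.le h).symm) (f ≫ m)
          = A.F.map (fh φ ha ha' f) ≫ u.t a' b ha' (hc.trans (wa_step u.le v.le h).symm) m :=
        u.natl a a' b _ _ _ f m
      rw [e1, Category.assoc]
  natr a b b' ha hc hc' m g := by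
    by_cases h : A.pt = B.pt
    · rw [dif_pos h, dif_pos h]
      have e1 : v.t a b' (ha.trans h) hc' (m ≫ g)
          = v.t a b (ha.trans h) hc m ≫ C.F.map (fh φ hc hc' g) :=
        v.natr a b b' _ _ _ m g
      rw [e1, ← Category.assoc]
    · rw [dif_neg h, dif_neg h]
      have hbc := (wa_step u.le v.le h).symm
      have e1 : u.t a b' ha (hc'.trans hbc) (m ≫ g)
          = u.t a b ha (hc.trans hbc) m ≫ B.F.map (fh φ (hc.trans hbc) (hc'.trans hbc) g) :=
        u.natr a b b' _ _ _ m g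
      have e2 : v.t b b' (hc.trans hbc) hc' g
          = B.F.map (fh φ (hc.trans hbc) (hc'.trans hbc) g) ≫ v.t b' b' (hc'.trans hbc) hc' (𝟙 b') :=
        v.t_shift_r _ _ _ g
      have e3 : v.t b b' (hc.trans hbc) hc' g
          = v.t b b (hc.trans hbc) hc (𝟙 b) ≫ C.F.map (fh φ hc hc' g) :=
        v.t_shift_l _ _ _ g
      rw [e1, Category.assoc, ← e2, e3, ← Category.assoc]

instance ECat : Category (EObj φ N) where
  Hom := EHom φ N
  id := Eid
  comp := Ecomp
  id_comp {A B} u := by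
    refine EHom.ext' (fun a b ha hb m => ?_)
    show dite _ _ _ = _
    rw [dif_pos rfl]
    show (Eid A).t a a ha ha (𝟙 a) ≫ u.t a b ha hb m = u.t a b ha hb m
    have : (Eid A).t a a ha ha (𝟙 a) = 𝟙 _ := A.F.map_id _
    rw [this, Category.id_comp]
  comp_id {A B} u := by
    refine EHom.ext' (fun a b ha hb m => ?_)
    by_cases h : A.pt = B.pt
    · show dite _ _ _ = _
      rw [dif_pos h]
      exact (u.t_shift_l ha (ha.trans h) hb m).symm
    · show dite _ _ _ = _
      rw [dif_neg h]
      have e : ∀ (pf : φ.obj b = B.pt),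
          EHom.t u a b ha pf m ≫ B.F.map (fh φ pf hb (𝟙 b)) = EHom.t u a b ha hb m := by
        intro pf
        rw [show B.F.map (fh φ pf hb (𝟙 b)) = 𝟙 _ from B.F.map_id _, Category.comp_id]
      exact e _
  assoc {A B C D} u v w := by
    refine EHom.ext' (fun a b ha hd m => ?_)
    by_cases h1 : A.pt = B.pt
    · by_cases h2 : B.pt = C.pt
      · have h3 : A.pt = C.pt := h1.trans h2
        show dite _ _ _ = dite _ _ _
        rw [dif_pos h3, dif_pos h1]
        show (dite _ _ _ : _ ⟶ _) ≫ _ = _ ≫ (dite _ _ _ : _ ⟶ _)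
        rw [dif_pos h1, dif_pos h2]
        exact Category.assoc _ _ _
      · have h3 : ¬ A.pt = C.pt := fun e => h2 (h1.symm.trans e)
        show dite _ _ _ = dite _ _ _
        rw [dif_neg h3, dif_pos h1]
        show ((dite _ _ _ : _ ⟶ _) ≫ _ : _ ⟶ _) = _ ≫ (dite _ _ _ : _ ⟶ _)
        rw [dif_pos h1, dif_neg h2]
        exact Category.assoc _ _ _
    · have hBC : B.pt = C.pt := wa_step (EHom.le u) (EHom.le v) h1
      have h3 : ¬ A.pt = C.pt := fun e => h1 (e.trans hBC.symm)
      show dite _ _ _ = dite _ _ _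
      rw [dif_neg h3, dif_neg h1]
      show ((dite _ _ _ : _ ⟶ _) ≫ _ : _ ⟶ _) = _ ≫ (dite _ _ _ : _ ⟶ _)
      rw [dif_neg h1, dif_pos hBC]
      exact Category.assoc _ _ _

end Exp

section Exp2

variable {M : Cat.{u,u}} {φ : M ⟶ walkingArrowCat.{u}} {N : Over walkingArrowCat.{u}}

lemma EObj.ext' {A B : EObj φ N} (h : A.pt = B.pt)
    (hobj : ∀ (m : ↥M) (hm : φ.obj m = A.pt), A.F.obj ⟨m, hm⟩ = B.F.obj ⟨m, hm.trans h⟩)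
    (hmap : ∀ (m m' : ↥M) (hm : φ.obj m = A.pt) (hm' : φ.obj m' = A.pt) (g : m ⟶ m'),
      A.F.map (fh φ hm hm' g) = eqToHom (hobj m hm) ≫ B.F.map (fh φ (hm.trans h) (hm'.trans h) g)
        ≫ eqToHom (hobj m' hm').symm) :
    A = B := by
  obtain ⟨pa, Fa, oa⟩ := A
  obtain ⟨pb, Fb, ob⟩ := B
  dsimp at h
  subst h
  have : Fa = Fb := by
    refine CategoryTheory.Functor.ext (fun x => ?_) ?_
    · obtain ⟨m, hm⟩ := x
      exact hobj m hm
    · intro x y f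
      obtain ⟨m, hm⟩ := x; obtain ⟨m', hm'⟩ := y
      exact hmap m m' hm hm' f
  subst this
  rfl

lemma EHom.conj {A A' B B' : EObj φ N} (p : A = A') (q : B = B')
    (u : A ⟶ B) (v : A' ⟶ B')
    (h : ∀ (a b : ↥M) (ha : φ.obj a = A.pt) (hb : φ.obj b = B.pt)
      (ha' : φ.obj a = A'.pt) (hb' : φ.obj b = B'.pt) (m : a ⟶ b)
      (e1 : A.F.obj ⟨a, ha⟩ = A'.F.obj ⟨a, ha'⟩) (e2 : B'.F.obj ⟨b, hb'⟩ = B.F.obj ⟨b, hb⟩),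
      EHom.t u a b ha hb m = eqToHom e1 ≫ EHom.t v a b ha' hb' m ≫ eqToHom e2) :
    u = eqToHom p ≫ v ≫ eqToHom q.symm := by
  subst p; subst q
  rw [eqToHom_refl, eqToHom_refl, Category.id_comp, Category.comp_id]
  refine EHom.ext' (fun a b ha hb m => ?_)
  have := h a b ha hb ha hb m rfl rfl
  rwa [eqToHom_refl, eqToHom_refl, Category.id_comp, Category.comp_id] at this

lemma comp_t_pos {A B C : EObj φ N} (u : A ⟶ B) (v : B ⟶ C) (h : A.pt = B.pt)
    (a b : ↥M) (ha : φ.obj a = A.pt) (hc : φ.obj b = C.pt) (m : a ⟶ b) :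
    EHom.t (u ≫ v) a b ha hc m
      = EHom.t u a a ha (ha.trans h) (𝟙 a) ≫ EHom.t v a b (ha.trans h) hc m := by
  show dite _ _ _ = _
  rw [dif_pos h]

lemma comp_t_neg {A B C : EObj φ N} (u : A ⟶ B) (v : B ⟶ C) (h : ¬ A.pt = B.pt)
    (a b : ↥M) (ha : φ.obj a = A.pt) (hc : φ.obj b = C.pt) (m : a ⟶ b) :
    EHom.t (u ≫ v) a b ha hc m
      = EHom.t u a b ha (hc.trans (wa_step (EHom.le u) (EHom.le v) h).symm) m
        ≫ EHom.t v b b (hc.trans (wa_step (EHom.le u) (EHom.le v) h).symm) hc (𝟙 b) := by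
  show dite _ _ _ = _
  rw [dif_neg h]

lemma id_t (A : EObj φ N) (a b : ↥M) (ha : φ.obj a = A.pt) (hb : φ.obj b = A.pt) (m : a ⟶ b) :
    EHom.t (𝟙 A) a b ha hb m = A.F.map (fh φ ha hb m) := rfl

variable (φ N)

def EπF : EObj φ N ⥤ ↥walkingArrowCat.{u} where
  obj A := A.pt
  map u := EHom.le u
  map_id _ := Subsingleton.elim _ _
  map_comp _ _ := Subsingleton.elim _ _

def Eπ : Cat.of (EObj φ N) ⟶ walkingArrowCat.{u} := Cat.Hom.ofFunctor (EπF φ N)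

def EOver : Over walkingArrowCat.{u} := Over.mk (Eπ φ N)

variable {φ N} (X : Over walkingArrowCat.{u})

def mkEobj (K : (Fp φ).obj X ⟶ N) (x : ↥(X.left)) : EObj φ N where
  pt := X.hom.obj x
  F :=
  { obj := fun a => K.left.obj ⟨(x, a.1), a.2.symm⟩
    map := fun {a b} g =>
      K.left.map (show (⟨(x, a.1), a.2.symm⟩ : Pb X.hom φ) ⟶ ⟨(x, b.1), b.2.symm⟩ from (𝟙 x, g))
    map_id := fun a => K.left.map_id _
    map_comp := fun {a b c} g h => by
      refine Eq.trans ?_ (K.left.map_comp _ _)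
      exact congrArg K.left.map (Prod.ext (Category.id_comp _).symm rfl) }
  over' := fun a => (cobj (Over.w K) ⟨(x, a.1), a.2.symm⟩).trans a.2

def mkEmap (K : (Fp φ).obj X ⟶ N) {x y : ↥(X.left)} (f : x ⟶ y) :
    EHom φ N (mkEobj X K x) (mkEobj X K y) where
  le := X.hom.map f
  t := fun a b ha hb m =>
    K.left.map (show (⟨(x, a), ha.symm⟩ : Pb X.hom φ) ⟶ ⟨(y, b), hb.symm⟩ from (f, m))
  natl := fun a a' b ha ha' hb f₀ m => by
    show _ = K.left.map _ ≫ _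
    refine Eq.trans ?_ (K.left.map_comp _ _)
    exact congrArg K.left.map (Prod.ext (Category.id_comp _).symm rfl)
  natr := fun a b b' ha hb hb' m g => by
    show _ = _ ≫ K.left.map _
    refine Eq.trans ?_ (K.left.map_comp _ _)
    exact congrArg K.left.map (Prod.ext (Category.comp_id _).symm rfl)

/-- Transpose a morphism `(Fp φ).obj X ⟶ N` to a functor `X.left ⥤ EObj`. -/
def mkEfun (K : (Fp φ).obj X ⟶ N) : ↥(X.left) ⥤ EObj φ N where
  obj := mkEobj X K
  map := mkEmap X K
  map_id x := by
    refine EHom.ext' (fun a b ha hb m => ?_)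
    rfl
  map_comp {x y z} f g := by
    refine EHom.ext' (fun a b ha hb m => ?_)
    by_cases h : (mkEobj X K x).pt = (mkEobj X K y).pt
    · rw [comp_t_pos (mkEmap X K f) (mkEmap X K g) h]
      show K.left.map _ = K.left.map _ ≫ K.left.map _
      refine Eq.trans ?_ (K.left.map_comp _ _)
      exact congrArg K.left.map (Prod.ext rfl (Category.id_comp _).symm)
    · rw [comp_t_neg (mkEmap X K f) (mkEmap X K g) h]
      show K.left.map _ = K.left.map _ ≫ K.left.map _
      refine Eq.trans ?_ (K.left.map_comp _ _)
      exact congrArg K.left.map (Prod.ext rfl (Category.comp_id _).symm)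

/-- The forward direction of the hom equivalence. -/
def toE (K : (Fp φ).obj X ⟶ N) : X ⟶ EOver φ N :=
  Over.homMk (Cat.Hom.ofFunctor (mkEfun X K) : X.left ⟶ Cat.of (EObj φ N)) (wfunext (fun _ => rfl))

/-- Transpose a morphism `X ⟶ EOver` to a functor on the concrete pullback. -/
def unEfunF (L : X ⟶ EOver φ N) : ↥(pbCat X.hom φ) ⥤ ↥N.left where
  obj p := (L.left.obj p.1.1).F.obj
    ⟨p.1.2, p.2.symm.trans (cobj (Over.w L) p.1.1).symm⟩
  map {p q} f := EHom.t (L.left.map f.1) p.1.2 q.1.2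
    (p.2.symm.trans (cobj (Over.w L) p.1.1).symm)
    (q.2.symm.trans (cobj (Over.w L) q.1.1).symm) f.2
  map_id p := by
    have e := congrArg
      (fun (w : L.left.obj p.1.1 ⟶ L.left.obj p.1.1) => EHom.t w p.1.2 p.1.2
        (p.2.symm.trans (cobj (Over.w L) p.1.1).symm)
        (p.2.symm.trans (cobj (Over.w L) p.1.1).symm) (𝟙 p.1.2))
      (L.left.map_id p.1.1)
    exact e.trans ((L.left.obj p.1.1).F.map_id _)
  map_comp {p q r} f g := by
    have hp := p.2.symm.trans (cobj (Over.w L) p.1.1).symm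
    have hq := q.2.symm.trans (cobj (Over.w L) q.1.1).symm
    have hr := r.2.symm.trans (cobj (Over.w L) r.1.1).symm
    have e := congrArg
      (fun (w : L.left.obj p.1.1 ⟶ L.left.obj r.1.1) => EHom.t w p.1.2 r.1.2 hp hr (f.2 ≫ g.2))
      (L.left.map_comp f.1 g.1)
    refine e.trans ?_
    by_cases h : (L.left.obj p.1.1).pt = (L.left.obj q.1.1).pt
    · erw [comp_t_pos (L.left.map f.1) (L.left.map g.1) h]
      have e1 : EHom.t (L.left.map g.1) p.1.2 r.1.2 (hp.trans h) hr (f.2 ≫ g.2)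
          = (L.left.obj q.1.1).F.map (fh φ (hp.trans h) hq f.2)
            ≫ EHom.t (L.left.map g.1) q.1.2 r.1.2 hq hr g.2 :=
        EHom.natl _ _ _ _ _ _ _ f.2 g.2
      have e2 : EHom.t (L.left.map f.1) p.1.2 q.1.2 hp hq f.2
          = EHom.t (L.left.map f.1) p.1.2 p.1.2 hp (hp.trans h) (𝟙 p.1.2)
            ≫ (L.left.obj q.1.1).F.map (fh φ (hp.trans h) hq f.2) :=
        EHom.t_shift_l _ _ _ _ f.2
      rw [e1, ← Category.assoc, ← e2]
    · erw [comp_t_neg (L.left.map f.1) (L.left.map g.1) h]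
      have hqr := (wa_step (EHom.le (L.left.map f.1)) (EHom.le (L.left.map g.1)) h).symm
      have e1 : EHom.t (L.left.map f.1) p.1.2 r.1.2 hp (hr.trans hqr) (f.2 ≫ g.2)
          = EHom.t (L.left.map f.1) p.1.2 q.1.2 hp hq f.2
            ≫ (L.left.obj q.1.1).F.map (fh φ hq (hr.trans hqr) g.2) :=
        EHom.natr _ _ _ _ _ _ _ f.2 g.2
      have e2 : EHom.t (L.left.map g.1) q.1.2 r.1.2 hq hr g.2
          = (L.left.obj q.1.1).F.map (fh φ hq (hr.trans hqr) g.2)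
            ≫ EHom.t (L.left.map g.1) r.1.2 r.1.2 (hr.trans hqr) hr (𝟙 r.1.2) :=
        EHom.t_shift_r _ _ _ _ g.2
      erw [e1, Category.assoc, ← e2]

def unEfun (L : X ⟶ EOver φ N) : pbCat X.hom φ ⟶ N.left := Cat.Hom.ofFunctor (unEfunF X L)

/-- The backward direction of the hom equivalence. -/
def fromE (L : X ⟶ EOver φ N) : (Fp φ).obj X ⟶ N :=
  Over.homMk (unEfun X L) (wfunext (fun p =>
    ((L.left.obj p.1.1).over' _).trans
      ((cobj (Over.w L) p.1.1).trans p.2)))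

end Exp2

section Equivalence

variable {M : Cat.{u,u}} {φ : M ⟶ walkingArrowCat.{u}} {N : Over walkingArrowCat.{u}}

lemma conj_triv {D : Type*} [Category D] {X Y : D} (e1 : X = X) (e2 : Y = Y) (v : X ⟶ Y) :
    eqToHom e1 ≫ v ≫ eqToHom e2 = v := by
  show 𝟙 _ ≫ v ≫ 𝟙 _ = v
  rw [Category.id_comp, Category.comp_id]

variable (X : Over walkingArrowCat.{u})

lemma fromE_toE (K : (Fp φ).obj X ⟶ N) : fromE X (toE X K) = K := by
  apply Over.OverMorphism.ext
  apply Cat.ext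
  show (unEfun X (toE X K)).toFunctor = K.left.toFunctor
  refine CategoryTheory.Functor.ext (fun p => rfl) ?_
  intro p q f
  erw [eqToHom_refl, eqToHom_refl, Category.id_comp, Category.comp_id]
  rfl

lemma toE_fromE (L : X ⟶ EOver φ N) : toE X (fromE X L) = L := by
  apply Over.OverMorphism.ext
  apply Cat.ext
  show mkEfun X (fromE X L) = L.left.toFunctor
  have hobj : ∀ x, mkEobj X (fromE X L) x = L.left.obj x := by
    intro x
    refine EObj.ext' ((cobj (Over.w L) x).symm)
      (fun m hm => rfl) ?_
    intro m m' hm hm' g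
    erw [conj_triv]
    show EHom.t (L.left.map (𝟙 x)) m m' _ _ g = _
    have e := congrArg
      (fun (w : L.left.obj x ⟶ L.left.obj x) => EHom.t w m m'
        (hm.trans (cobj (Over.w L) x).symm)
        (hm'.trans (cobj (Over.w L) x).symm) g)
      (L.left.map_id x)
    exact e
  refine CategoryTheory.Functor.ext hobj ?_
  intro x y f
  refine EHom.conj (hobj x) (hobj y) _ _ ?_
  intro a b ha hb ha' hb' m e1 e2
  refine Eq.trans (show EHom.t (mkEmap X (fromE X L) f) a b ha hb m
      = EHom.t (L.left.map f) a b ha' hb' m from rfl) ?_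
  exact (conj_triv e1 e2 _).symm

lemma toE_natural {X' : Over walkingArrowCat.{u}} (f : X' ⟶ X) (K : (Fp φ).obj X ⟶ N) :
    toE X' ((Fp φ).map f ≫ K) = f ≫ toE X K := by
  apply Over.OverMorphism.ext
  apply Cat.ext
  show mkEfun X' ((Fp φ).map f ≫ K) = f.left.toFunctor ⋙ mkEfun X K
  have hobj : ∀ x, mkEobj X' ((Fp φ).map f ≫ K) x = mkEobj X K (f.left.obj x) := by
    intro x
    refine EObj.ext' ((cobj (Over.w f) x).symm)
      (fun m hm => rfl) ?_
    intro m m' hm hm' g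
    erw [conj_triv]
    show K.left.map _ = K.left.map _
    exact congrArg K.left.map (Prod.ext (f.left.map_id x) rfl)
  refine CategoryTheory.Functor.ext hobj ?_
  intro x y g
  refine EHom.conj (hobj x) (hobj y) _ _ ?_
  intro a b ha hb ha' hb' m e1 e2
  refine Eq.trans (show EHom.t (mkEmap X' ((Fp φ).map f ≫ K) g) a b ha hb m
      = EHom.t (mkEmap X K (f.left.map g)) a b ha' hb' m from rfl) ?_
  exact (conj_triv e1 e2 _).symm

end Equivalence

section Final

variable {M : Cat.{u,u}} (φ : M ⟶ walkingArrowCat.{u})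

def expEquiv (X : Over walkingArrowCat.{u}) (N : Over walkingArrowCat.{u}) :
    ((Fp φ).obj X ⟶ N) ≃ (X ⟶ EOver φ N) where
  toFun := toE X
  invFun := fromE X
  left_inv := fromE_toE X
  right_inv := toE_fromE X

def FpAdj : Fp φ ⊣ Adjunction.rightAdjointOfEquiv (expEquiv φ) (fun X' X N f g => toE_natural X f g) :=
  Adjunction.adjunctionOfEquivRight _ _

noncomputable def closedZ (Z : Over walkingArrowCat.{u}) : Closed Z where
  rightAdj := _
  adj := Adjunction.ofNatIsoLeft (FpAdj Z.hom)
    (tensorLeftIso Z (Fp Z.hom) (fpP Z) (fpQ Z)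
      (fun f => fpP_nat Z f) (fun f => fpQ_nat Z f) (fpFanIsLimit Z))

end Final

end St4


theorem statement4 :
    (∀ (M : Cat.{u, u}) (φ : M ⟶ walkingArrowCat.{u}), CatExponentiable φ) ∧
    Nonempty (MonoidalClosed (Over walkingArrowCat.{u})) := by
  constructor
  · intro M φ
    exact ⟨⟨_, ⟨Adjunction.ofNatIsoLeft ((St4.closedZ (Over.mk φ)).adj)
      (St4.tensorLeftIso (Over.mk φ) (Over.pullback φ ⋙ Over.map φ) (St4.faP φ) (St4.faQ φ)
        (fun f => St4.faP_nat φ f) (fun f => St4.faQ_nat φ f) (St4.faFanIsLimit φ)).symm⟩⟩⟩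
  · exact ⟨⟨fun Z => St4.closedZ Z⟩⟩
end

section
/- Let M → [1] and N → [1] be functors with fibers M₀, M₁, N₀, N₁, and let F : M₀ ⥤ N₀ and G : M₁ ⥤ N₁ be functors. The set of morphisms F → G in the exponential Fun^{[1]}(M, N) over [1] (the internal hom of Cat/[1]) lying over the unique nonidentity morphism of [1] is naturally isomorphic to the limit of the functor T̃w(M) → M₀ᵒᵖ × M₁ → N₀ᵒᵖ × N₁ → Set, where the middle functor is Fᵒᵖ × G and the last sends (x, y) to N(x, y), and T̃w(M) := (M₀ᵒᵖ × M₁) ×_{Mᵒᵖ × M} Tw(M) is the category of morphisms of M from an object of M₀ to an object of M₁. -/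
/-!
STATEMENT 10: Let `M ⥤ [1]` and `N ⥤ [1]` be functors with fibers
`M₀, M₁, N₀, N₁`, and let `F : M₀ ⥤ N₀` and `G : M₁ ⥤ N₁` be functors.  The
set of morphisms `F ⟶ G` in the internal hom `Fun^{[1]}(M, N)` of `Cat/[1]`
lying over the nonidentity arrow of `[1]` — equivalently, by the universal
property of the exponential, the set of functors `M ⥤ N` over `[1]`
restricting to `F` and `G` on the fibers — is naturally isomorphic to the
limit of the functor `T̃w(M) ⥤ M₀ᵒᵖ × M₁ ⥤ N₀ᵒᵖ × N₁ ⥤ Type`, where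
`T̃w(M) ⊆ Tw(M)` is the category of morphisms of `M` from an object of `M₀`
to an object of `M₁`, the middle functor is `Fᵒᵖ × G`, and the last sends
`(x, y)` to `N(x, y)`.
-/

open CategoryTheory Limits

universe u

variable {M : Type u} [Category.{u} M] {N : Type u} [Category.{u} N]

/-- The fiber of `p : M ⥤ [1]` over `i`. -/
abbrev Fiber {M : Type u} [Category.{u} M] (p : M ⥤ Fin 2) (i : Fin 2) :=
  ObjectProperty.FullSubcategory (fun X => p.obj X = i)

/-- A functor `M ⥤ N` over `[1]` restricting to `F` on the fibers over `0`
and to `G` on the fibers over `1`: a morphism `F ⟶ G` of `Fun^{[1]}(M, N)`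
over the nonidentity arrow of `[1]`. -/
structure RestrictingFunctor (p : M ⥤ Fin 2) (q : N ⥤ Fin 2)
    (F : Fiber p 0 ⥤ Fiber q 0) (G : Fiber p 1 ⥤ Fiber q 1) : Type u where
  H : M ⥤ N
  hw : H ⋙ q = p
  h0 : ∀ X : Fiber p 0, H.obj X.obj = (F.obj X).obj
  h0map : ∀ {X Y : Fiber p 0} (f : X ⟶ Y),
    H.map f.hom =
      eqToHom (h0 X) ≫
        (ObjectProperty.ι _).map (F.map f) ≫ eqToHom (h0 Y).symm
  h1 : ∀ X : Fiber p 1, H.obj X.obj = (G.obj X).obj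
  h1map : ∀ {X Y : Fiber p 1} (f : X ⟶ Y),
    H.map f.hom =
      eqToHom (h1 X) ≫
        (ObjectProperty.ι _).map (G.map f) ≫ eqToHom (h1 Y).symm

/-- The restricted twisted arrow category `T̃w(M)`: morphisms of `M` from an
object of the fiber `M₀` to an object of the fiber `M₁` (a full subcategory
of the twisted arrow category `Tw(M)`, realized as the category of elements
of the `Hom` functor). -/
abbrev RestrictedTw (p : M ⥤ Fin 2) :=
  ObjectProperty.FullSubcategory (fun e : (Functor.hom M).Elements =>
    p.obj e.1.1.unop = 0 ∧ p.obj e.1.2 = 1)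

variable (p : M ⥤ Fin 2)

/-- The source of a restricted twisted arrow, in the fiber `M₀`. -/
def twSrc (e : RestrictedTw p) : Fiber p 0 := ⟨e.obj.1.1.unop, e.property.1⟩

/-- The target of a restricted twisted arrow, in the fiber `M₁`. -/
def twTgt (e : RestrictedTw p) : Fiber p 1 := ⟨e.obj.1.2, e.property.2⟩

/-- The source component of a morphism of restricted twisted arrows. -/
def twMor0 {e e' : RestrictedTw p} (f : e ⟶ e') : twSrc p e' ⟶ twSrc p e :=
  InducedCategory.homMk f.hom.1.1.unop

/-- The target component of a morphism of restricted twisted arrows. -/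
def twMor1 {e e' : RestrictedTw p} (f : e ⟶ e') : twTgt p e ⟶ twTgt p e' :=
  InducedCategory.homMk f.hom.1.2

variable (q : N ⥤ Fin 2) (F : Fiber p 0 ⥤ Fiber q 0) (G : Fiber p 1 ⥤ Fiber q 1)

/-- The integrand `T̃w(M) ⥤ Type`, sending a morphism `u : x ⟶ y` of `M`
(with `x ∈ M₀`, `y ∈ M₁`) to `N(F x, G y)`. -/
def twIntegrand : RestrictedTw p ⥤ Type u where
  obj e := (F.obj (twSrc p e)).obj ⟶ (G.obj (twTgt p e)).obj
  map {e e'} f := TypeCat.ofHom fun φ =>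
    (ObjectProperty.ι _).map (F.map (twMor0 p f)) ≫ φ ≫
      (ObjectProperty.ι _).map (G.map (twMor1 p f))
  map_id e := by
    ext φ
    have h0 : twMor0 p (𝟙 e) = 𝟙 (twSrc p e) := rfl
    have h1 : twMor1 p (𝟙 e) = 𝟙 (twTgt p e) := rfl
    show (ObjectProperty.ι _).map (F.map (twMor0 p (𝟙 e))) ≫ φ ≫
      (ObjectProperty.ι _).map (G.map (twMor1 p (𝟙 e))) = φ
    rw [h0, h1, F.map_id, G.map_id, (ObjectProperty.ι _).map_id,
      (ObjectProperty.ι _).map_id]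
    simp
  map_comp {e e' e''} f g := by
    ext φ
    have h0 : twMor0 p (f ≫ g) = twMor0 p g ≫ twMor0 p f := rfl
    have h1 : twMor1 p (f ≫ g) = twMor1 p f ≫ twMor1 p g := rfl
    show (ObjectProperty.ι _).map (F.map (twMor0 p (f ≫ g))) ≫ φ ≫
      (ObjectProperty.ι _).map (G.map (twMor1 p (f ≫ g))) = _
    rw [h0, h1]
    show _ = (ObjectProperty.ι _).map (F.map (twMor0 p g)) ≫
      ((ObjectProperty.ι _).map (F.map (twMor0 p f)) ≫ φ ≫
        (ObjectProperty.ι _).map (G.map (twMor1 p f))) ≫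
      (ObjectProperty.ι _).map (G.map (twMor1 p g))
    rw [F.map_comp, G.map_comp, (ObjectProperty.ι _).map_comp,
      (ObjectProperty.ι _).map_comp]
    simp
variable {p q F G}

lemma elements_snd_eq {e e' : RestrictedTw p} (f : e ⟶ e') :
    e'.obj.2 = (ObjectProperty.ι _).map (twMor0 p f) ≫ e.obj.2 ≫
      (ObjectProperty.ι _).map (twMor1 p f) := f.hom.2.symm

/-- The section associated to a restricting functor. -/
def toSections (R : RestrictingFunctor p q F G) : (twIntegrand p q F G).sections where
  val e := eqToHom (R.h0 (twSrc p e)).symm ≫ R.H.map e.obj.2 ≫ eqToHom (R.h1 (twTgt p e))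
  property {e e'} f := by
    show (ObjectProperty.ι _).map (F.map (twMor0 p f)) ≫ _ ≫
      (ObjectProperty.ι _).map (G.map (twMor1 p f)) = _
    dsimp only
    erw [elements_snd_eq f, R.H.map_comp, R.H.map_comp]
    erw [R.h0map (twMor0 p f), R.h1map (twMor1 p f)]
    simp
    erw [Category.assoc, Category.assoc, Category.assoc, eqToHom_trans, eqToHom_refl, Category.comp_id]
    rfl
lemma fin2_ne (i : Fin 2) (h : ¬ i = 0) : i = 1 := by omega

lemma le_of_map {X Y : M} (f : X ⟶ Y) : p.obj X ≤ p.obj Y := leOfHom (p.map f)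

variable (p q F G) (s : (twIntegrand p q F G).sections)

/-- Object part of the functor built from a section. -/
def mkObj (X : M) : N :=
  if h : p.obj X = 0 then (F.obj ⟨X, h⟩).obj else (G.obj ⟨X, fin2_ne _ h⟩).obj

lemma mkObj_pos {X : M} (h : p.obj X = 0) : mkObj p q F G X = (F.obj ⟨X, h⟩).obj :=
  dif_pos h

lemma mkObj_neg {X : M} (h : p.obj X = 1) : mkObj p q F G X = (G.obj ⟨X, h⟩).obj :=
  dif_neg (by omega)

/-- Map part of the functor built from a section. -/
def mkMap {X Y : M} (f : X ⟶ Y) : mkObj p q F G X ⟶ mkObj p q F G Y :=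
  if hX : p.obj X = 0 then
    if hY : p.obj Y = 0 then
      eqToHom (mkObj_pos p q F G hX) ≫
        (ObjectProperty.ι _).map
          (F.map (show (⟨X, hX⟩ : Fiber p 0) ⟶ ⟨Y, hY⟩ from InducedCategory.homMk f)) ≫
        eqToHom (mkObj_pos p q F G hY).symm
    else
      eqToHom (mkObj_pos p q F G hX) ≫
        s.val ⟨⟨(Opposite.op X, Y), f⟩, hX, fin2_ne _ hY⟩ ≫
        eqToHom (mkObj_neg p q F G (fin2_ne _ hY)).symm
  else
    if hY : p.obj Y = 0 then
      (by have := le_of_map (p := p) f; rw [hY] at this; rw [fin2_ne _ hX] at this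
          exact absurd this (by decide) : False).elim
    else
      eqToHom (mkObj_neg p q F G (fin2_ne _ hX)) ≫
        (ObjectProperty.ι _).map
          (G.map (show (⟨X, fin2_ne _ hX⟩ : Fiber p 1) ⟶ ⟨Y, fin2_ne _ hY⟩ from InducedCategory.homMk f)) ≫
        eqToHom (mkObj_neg p q F G (fin2_ne _ hY)).symm
open Opposite in
lemma sec_natural_left {X Y Z : M} (a : X ⟶ Y) (u : Y ⟶ Z)
    (hX : p.obj X = 0) (hY : p.obj Y = 0) (hZ : p.obj Z = 1) :
    s.val ⟨⟨(op X, Z), a ≫ u⟩, hX, hZ⟩ =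
      (ObjectProperty.ι _).map
        (F.map (show (⟨X, hX⟩ : Fiber p 0) ⟶ ⟨Y, hY⟩ from InducedCategory.homMk a)) ≫
      s.val ⟨⟨(op Y, Z), u⟩, hY, hZ⟩ := by
  have h := s.property
    (j := ⟨⟨(op Y, Z), u⟩, hY, hZ⟩) (j' := ⟨⟨(op X, Z), a ≫ u⟩, hX, hZ⟩)
    ⟨(a.op, 𝟙 Z), by simp [Functor.hom]; rfl⟩
  rw [← h]
  show (ObjectProperty.ι _).map (F.map _) ≫ _ ≫
    (ObjectProperty.ι _).map (G.map (𝟙 _)) = _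
  rw [G.map_id]
  simp only [twMor0]
  show _ ≫ (_ ≫ 𝟙 ((G.obj _).obj)) = _
  simp
  erw [Category.comp_id]
  rfl

open Opposite in
lemma sec_natural_right {X Y Z : M} (u : X ⟶ Y) (b : Y ⟶ Z)
    (hX : p.obj X = 0) (hY : p.obj Y = 1) (hZ : p.obj Z = 1) :
    s.val ⟨⟨(op X, Z), u ≫ b⟩, hX, hZ⟩ =
      s.val ⟨⟨(op X, Y), u⟩, hX, hY⟩ ≫
      (ObjectProperty.ι _).map
        (G.map (show (⟨Y, hY⟩ : Fiber p 1) ⟶ ⟨Z, hZ⟩ from InducedCategory.homMk b)) := by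
  have h := s.property
    (j := ⟨⟨(op X, Y), u⟩, hX, hY⟩) (j' := ⟨⟨(op X, Z), u ≫ b⟩, hX, hZ⟩)
    ⟨((𝟙 X).op, b), by simp [Functor.hom]; rfl⟩
  rw [← h]
  show (ObjectProperty.ι _).map (F.map (𝟙 _)) ≫ _ ≫
    (ObjectProperty.ι _).map (G.map _) = _
  rw [F.map_id]
  simp only [twMor1]
  show (𝟙 ((F.obj _).obj)) ≫ _ = _
  simp
  rfl
lemma no_down {X Y : M} (f : X ⟶ Y) (hX : ¬ p.obj X = 0) (hY : p.obj Y = 0) : False := by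
  have := le_of_map (p := p) f
  rw [hY, fin2_ne _ hX] at this
  exact absurd this (by decide)

/-- The functor built from a section. -/
def mkFunctor : M ⥤ N where
  obj := mkObj p q F G
  map := mkMap p q F G s
  map_id X := by
    show mkMap p q F G s (𝟙 X) = 𝟙 (mkObj p q F G X)
    unfold mkMap
    by_cases h : p.obj X = 0
    · simp only [dif_pos h]
      have hc := (F ⋙ ObjectProperty.ι _).map_id ⟨X, h⟩
      erw [hc]
      simp
    · simp only [dif_neg h]
      have hc := (G ⋙ ObjectProperty.ι _).map_id ⟨X, fin2_ne _ h⟩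
      erw [hc]
      simp
  map_comp {X Y Z} f g := by
    show mkMap p q F G s (f ≫ g) = mkMap p q F G s f ≫ mkMap p q F G s g
    unfold mkMap
    by_cases hX : p.obj X = 0 <;> by_cases hY : p.obj Y = 0 <;> by_cases hZ : p.obj Z = 0
    · -- 0 0 0
      simp only [dif_pos hX, dif_pos hY, dif_pos hZ]
      have hc := (F ⋙ ObjectProperty.ι _).map_comp
        (X := ⟨X, hX⟩) (Y := ⟨Y, hY⟩) (Z := ⟨Z, hZ⟩) (InducedCategory.homMk f) (InducedCategory.homMk g)
      erw [hc]
      simp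
    · -- 0 0 1
      simp only [dif_pos hX, dif_pos hY, dif_neg hZ]
      rw [sec_natural_left p q F G s f g hX hY (fin2_ne _ hZ)]
      simp
      erw [Category.assoc]
      rfl
    · -- 0 1 0 impossible
      exact (no_down p g hY hZ).elim
    · -- 0 1 1
      simp only [dif_pos hX, dif_neg hY, dif_neg hZ]
      rw [sec_natural_right p q F G s f g hX (fin2_ne _ hY) (fin2_ne _ hZ)]
      simp
      erw [Category.assoc, Category.assoc, eqToHom_trans_assoc, eqToHom_refl, Category.id_comp]
      rfl
    · -- 1 0 0 impossible
      exact (no_down p f hX hY).elim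
    · -- 1 0 1 impossible
      exact (no_down p f hX hY).elim
    · -- 1 1 0 impossible
      exact (no_down p g hY hZ).elim
    · -- 1 1 1
      simp only [dif_neg hX, dif_neg hY, dif_neg hZ]
      have hc := (G ⋙ ObjectProperty.ι _).map_comp
        (X := ⟨X, fin2_ne _ hX⟩) (Y := ⟨Y, fin2_ne _ hY⟩) (Z := ⟨Z, fin2_ne _ hZ⟩) (InducedCategory.homMk f) (InducedCategory.homMk g)
      erw [hc]
      simp
/-- The restricting functor built from a section. -/
def fromSections : RestrictingFunctor p q F G where
  H := mkFunctor p q F G s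
  hw := by
    apply CategoryTheory.Functor.ext
    · intro X Y f
      exact Subsingleton.elim _ _
    · intro X
      by_cases h : p.obj X = 0
      · show q.obj (mkObj p q F G X) = p.obj X
        rw [mkObj_pos p q F G h, (F.obj ⟨X, h⟩).property, h]
      · show q.obj (mkObj p q F G X) = p.obj X
        rw [mkObj_neg p q F G (fin2_ne _ h), (G.obj ⟨X, fin2_ne _ h⟩).property, fin2_ne _ h]
  h0 X := mkObj_pos p q F G X.property
  h0map {X Y} f := by
    show mkMap p q F G s _ = _
    unfold mkMap
    simp only [dif_pos X.property, dif_pos Y.property]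
    rfl
  h1 X := mkObj_neg p q F G X.property
  h1map {X Y} f := by
    show mkMap p q F G s _ = _
    unfold mkMap
    have hx : ¬ p.obj X.obj = 0 := by rw [X.property]; decide
    have hy : ¬ p.obj Y.obj = 0 := by rw [Y.property]; decide
    simp only [dif_neg hx, dif_neg hy]
    rfl

variable {p q F G}

lemma RestrictingFunctor.ext' {A B : RestrictingFunctor p q F G} (h : A.H = B.H) : A = B := by
  cases A; cases B; cases h; rfl

lemma left_inv (R : RestrictingFunctor p q F G) : fromSections p q F G (toSections R) = R := by
  apply RestrictingFunctor.ext'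
  apply CategoryTheory.Functor.ext
  · intro X Y f
    show mkMap p q F G (toSections R) f = _
    unfold mkMap
    by_cases hX : p.obj X = 0 <;> by_cases hY : p.obj Y = 0
    · simp only [dif_pos hX, dif_pos hY]
      erw [R.h0map (show (⟨X, hX⟩ : Fiber p 0) ⟶ ⟨Y, hY⟩ from InducedCategory.homMk f)]
      simp
      rfl
    · simp only [dif_pos hX, dif_neg hY]
      show _ ≫ (eqToHom _ ≫ R.H.map f ≫ eqToHom _) ≫ _ = _
      simp
      erw [eqToHom_trans_assoc, eqToHom_trans]
      rfl
    · exact (no_down p f hX hY).elim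
    · simp only [dif_neg hX, dif_neg hY]
      erw [R.h1map (show (⟨X, fin2_ne _ hX⟩ : Fiber p 1) ⟶ ⟨Y, fin2_ne _ hY⟩ from InducedCategory.homMk f)]
      simp
      rfl
  · intro X
    show mkObj p q F G X = R.H.obj X
    by_cases h : p.obj X = 0
    · rw [mkObj_pos p q F G h, ← R.h0 ⟨X, h⟩]
    · rw [mkObj_neg p q F G (fin2_ne _ h), ← R.h1 ⟨X, fin2_ne _ h⟩]

lemma right_inv (s : (twIntegrand p q F G).sections) :
    toSections (fromSections p q F G s) = s := by
  apply Subtype.ext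
  funext e
  show eqToHom _ ≫ mkMap p q F G s e.obj.2 ≫ eqToHom _ = s.val e
  unfold mkMap
  have h0 := e.property.1
  have h1 := e.property.2
  have hy : ¬ p.obj e.obj.1.2 = 0 := by rw [h1]; decide
  simp only [dif_pos h0, dif_neg hy]
  have he : (⟨⟨(Opposite.op e.obj.1.1.unop, e.obj.1.2), e.obj.2⟩, h0, fin2_ne _ hy⟩ :
      RestrictedTw p) = e := rfl
  simp only [Category.assoc, eqToHom_trans, eqToHom_trans_assoc, eqToHom_refl, Category.comp_id,
    Category.id_comp]
  erw [eqToHom_trans_assoc, Category.assoc, eqToHom_trans, eqToHom_refl, eqToHom_refl, Category.comp_id, Category.id_comp]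
  rfl
variable (p q F G)

theorem statement10 :
    Nonempty (RestrictingFunctor p q F G ≃ limit (twIntegrand p q F G)) :=
  ⟨(Equiv.mk toSections (fromSections p q F G) left_inv right_inv).trans
    (Types.limitEquivSections (twIntegrand p q F G)).symm⟩
end
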